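/- Let 0 < m < M, K > k real, and 0 < q < 1 with q·m^{q-1} ≥ (K-k)/(M-m) ≥ q·M^{q-1}. Define u(t) = k + ((K-k)/(M-m))(t-m) - t^q on [m,M]. Then for all t ∈ [m,M], u(t) ≥ k + ((K-k)/(M-m))·(((K-k)/(q(M-m)))^{1/(q-1)} - m) - ((K-k)/(q(M-m)))^{q/(q-1)}, and u(t) ≤ max{k - m^q, K - M^q}. -/

import Mathlib

theorem difference_lemma_bounds (m M K k q : ℝ) (hm : 0 < m) (hmM : m < M)
    (hKk : K > k) (hq0 : 0 < q) (hq1 : q < 1)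
    (h1 : q * m ^ (q - 1) ≥ (K - k) / (M - m))
    (h2 : (K - k) / (M - m) ≥ q * M ^ (q - 1))
    (t : ℝ) (ht : t ∈ Set.Icc m M) :
    (k + (K - k) / (M - m) * (((K - k) / (q * (M - m))) ^ (1 / (q - 1)) - m)
        - ((K - k) / (q * (M - m))) ^ (q / (q - 1))
      ≤ k + (K - k) / (M - m) * (t - m) - t ^ q) ∧
    k + (K - k) / (M - m) * (t - m) - t ^ q ≤ max (k - m ^ q) (K - M ^ q) := by
  obtain ⟨htm, htM⟩ := ht
  have hMm : (0:ℝ) < M - m := by linarith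
  have hKk' : (0:ℝ) < K - k := by linarith
  set c := (K - k) / (M - m) with hcdef
  have hc : 0 < c := div_pos hKk' hMm
  have hcq0 : 0 < c / q := div_pos hc hq0
  have hq1' : q - 1 ≠ 0 := by linarith
  set t1 := (c / q) ^ (1 / (q - 1)) with ht1def
  have ht1pos : 0 < t1 := Real.rpow_pos_of_pos hcq0 _
  have ht1pow : t1 ^ (q - 1) = c / q := by
    rw [ht1def, ← Real.rpow_mul hcq0.le, one_div_mul_cancel hq1', Real.rpow_one]
  have ht1q : t1 ^ q = (c / q) ^ (q / (q - 1)) := by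
    rw [ht1def, ← Real.rpow_mul hcq0.le]
    congr 1
    field_simp
  have hqc : q * t1 ^ (q - 1) = c := by
    rw [ht1pow]
    field_simp
  have hcq' : (K - k) / (q * (M - m)) = c / q := by
    rw [hcdef, div_div, mul_comm]
  have htpos : 0 < t := lt_of_lt_of_le hm htm
  have tangent : ∀ x : ℝ, 0 < x → x ^ q ≤ t1 ^ q + c * (x - t1) := by
    intro x hx
    have hxt : 0 < x / t1 := div_pos hx ht1pos
    have hs : (-1:ℝ) ≤ x / t1 - 1 := by linarith
    have hbern := rpow_one_add_le_one_add_mul_self hs hq0.le hq1.le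
    rw [show (1:ℝ) + (x / t1 - 1) = x / t1 by ring] at hbern
    rw [Real.div_rpow hx.le ht1pos.le] at hbern
    have hBpos : 0 < t1 ^ q := Real.rpow_pos_of_pos ht1pos q
    have hx' : x ^ q ≤ (1 + q * (x / t1 - 1)) * t1 ^ q := (div_le_iff₀ hBpos).mp hbern
    have hB : t1 ^ q = t1 ^ (q - 1) * t1 := by
      rw [← Real.rpow_add_one ht1pos.ne']
      ring_nf
    have key : (1 + q * (x / t1 - 1)) * t1 ^ q = t1 ^ q + c * (x - t1) := by
      rw [← hqc, hB]
      field_simp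
    linarith [key ▸ hx']
  constructor
  · rw [hcq', ← ht1q, ← ht1def]
    have := tangent t htpos
    linarith
  · set a := (M - t) / (M - m) with hadef
    set b := (t - m) / (M - m) with hbdef
    have ha : 0 ≤ a := div_nonneg (by linarith) hMm.le
    have hb : 0 ≤ b := div_nonneg (by linarith) hMm.le
    have hab : a + b = 1 := by
      rw [hadef, hbdef, ← add_div, div_eq_one_iff_eq hMm.ne']
      ring
    have htcomb : a * m + b * M = t := by
      rw [hadef, hbdef]
      field_simp
      ring
    have hconc := (Real.concaveOn_rpow hq0.le hq1.le).2 (Set.mem_Ici.mpr hm.le)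
      (Set.mem_Ici.mpr (by linarith : (0:ℝ) ≤ M)) ha hb hab
    simp only [smul_eq_mul] at hconc
    rw [htcomb] at hconc
    have hcMm : c * (M - m) = K - k := div_mul_cancel₀ _ hMm.ne'
    have hbt : b * (M - m) = t - m := by
      rw [hbdef]; field_simp
    have hct : c * (t - m) = b * (K - k) := by
      rw [← hbt, ← hcMm]; ring
    have h1' : k - m ^ q ≤ max (k - m ^ q) (K - M ^ q) := le_max_left _ _
    have h2' : K - M ^ q ≤ max (k - m ^ q) (K - M ^ q) := le_max_right _ _
    have hma := mul_le_mul_of_nonneg_left h1' ha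
    have hmb := mul_le_mul_of_nonneg_left h2' hb
    have habM : a * max (k - m ^ q) (K - M ^ q) + b * max (k - m ^ q) (K - M ^ q)
        = max (k - m ^ q) (K - M ^ q) := by
      rw [← add_mul, hab, one_mul]
    have hkab : a * k + b * k = k := by rw [← add_mul, hab, one_mul]
    linarith
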